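/- arXiv:2504.05114 — 2 statements merged into one kernel-verified Lean document; each statement's English description precedes it below -/
import Mathlib

section
/- Let WN = (P, T, F) be a sound workflow net. Then every transition t in ▶• (the postset of the initial place) has ▶ as its unique input place: if (p, t) ∈ F for some place p, then p = ▶. (Otherwise t would be a dead transition, contradicting soundness, since the initial marking assigns no token to p and no marking except the initial one assigns a token to ▶.) -/
open Classical

/-- The edge relation of the underlying bipartite graph of a Petri net:
places and transitions are nodes, flow pairs are directed edges. -/
def NetEdge {P T : Type} (Fpt : P → T → Prop) (Ftp : T → P → Prop) :
    (P ⊕ T) → (P ⊕ T) → Prop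
  | Sum.inl p, Sum.inr t => Fpt p t
  | Sum.inr t, Sum.inl p => Ftp t p
  | _, _ => False

/-- A workflow net: a Petri net with flow relation split into its
place-to-transition part `Fpt` and transition-to-place part `Ftp`,
a unique initial place `source` (empty preset), a unique output place `sink`
(empty postset), and every node on a directed path from `source` to `sink`. -/
structure WorkflowNet (P T : Type) where
  Fpt : P → T → Prop
  Ftp : T → P → Prop
  source : P
  sink : P
  source_pre_empty : ∀ t, ¬ Ftp t source
  sink_post_empty : ∀ t, ¬ Fpt sink t
  source_unique : ∀ p, (∀ t, ¬ Ftp t p) → p = source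
  sink_unique : ∀ p, (∀ t, ¬ Fpt p t) → p = sink
  on_path : ∀ x : P ⊕ T,
    Relation.ReflTransGen (NetEdge Fpt Ftp) (Sum.inl source) x ∧
    Relation.ReflTransGen (NetEdge Fpt Ftp) x (Sum.inl sink)

variable {P T : Type}

/-- The preset `•p` of a place: transitions `t` with `(t, p) ∈ F`. -/
def preset (N : WorkflowNet P T) (p : P) : Set T := {t | N.Ftp t p}

/-- The postset `p•` of a place: transitions `t` with `(p, t) ∈ F`. -/
def postset (N : WorkflowNet P T) (p : P) : Set T := {t | N.Fpt p t}

/-- The initial marking: one token on the initial place, none elsewhere. -/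
noncomputable def initialMarking (N : WorkflowNet P T) : P → ℕ :=
  fun p => if p = N.source then 1 else 0

/-- The final marking: one token on the output place, none elsewhere. -/
noncomputable def finalMarking (N : WorkflowNet P T) : P → ℕ :=
  fun p => if p = N.sink then 1 else 0

/-- A marking enables `t` iff every input place of `t` holds a token. -/
def Enables (N : WorkflowNet P T) (M : P → ℕ) (t : T) : Prop :=
  ∀ p, N.Fpt p t → 0 < M p

/-- `Fires N M t M'`: `t` is enabled at `M` and firing it yields `M'`. -/
def Fires (N : WorkflowNet P T) (M : P → ℕ) (t : T) (M' : P → ℕ) : Prop :=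
  Enables N M t ∧ ∀ p,
    (N.Fpt p t ∧ ¬ N.Ftp t p → M' p = M p - 1) ∧
    (N.Ftp t p ∧ ¬ N.Fpt p t → M' p = M p + 1) ∧
    (¬ (N.Fpt p t ∧ ¬ N.Ftp t p) → ¬ (N.Ftp t p ∧ ¬ N.Fpt p t) → M' p = M p)

/-- Successive firing of a finite sequence of transitions from a marking. -/
inductive FiresSeq (N : WorkflowNet P T) : (P → ℕ) → List T → (P → ℕ) → Prop
  | nil (M : P → ℕ) : FiresSeq N M [] M
  | cons {M M' M'' : P → ℕ} {t : T} {σ : List T} :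
      Fires N M t M' → FiresSeq N M' σ M'' → FiresSeq N M (t :: σ) M''

/-- A firing sequence: fireable successively from the initial marking. -/
def FiringSequence (N : WorkflowNet P T) (σ : List T) : Prop :=
  ∃ M, FiresSeq N (initialMarking N) σ M

/-- A reachable marking. -/
def Reachable (N : WorkflowNet P T) (M : P → ℕ) : Prop :=
  ∃ σ, FiresSeq N (initialMarking N) σ M

/-- A run: a firing sequence leading from the initial to the final marking. -/
def IsRun (N : WorkflowNet P T) (σ : List T) : Prop :=
  FiresSeq N (initialMarking N) σ (finalMarking N)

/-- Safety: every reachable marking puts at most one token in each place. -/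
def Safe (N : WorkflowNet P T) : Prop :=
  ∀ M, Reachable N M → ∀ p, M p ≤ 1

/-- Soundness: option to complete, proper completion, no dead transitions. -/
def Sound (N : WorkflowNet P T) : Prop :=
  (∀ M, Reachable N M → ∃ σ, FiresSeq N M σ (finalMarking N)) ∧
  (∀ M, Reachable N M → 0 < M N.sink → M = finalMarking N) ∧
  (∀ t : T, ∃ M, Reachable N M ∧ Enables N M t)

/-- `AtMostOne(A)`: at most one position of the trace carries a symbol of `A`. -/
def AtMostOneC {α : Type} (A : Set α) (σ : List α) : Prop :=
  ∀ i j : Fin σ.length, σ.get i ∈ A → σ.get j ∈ A → i = j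

/-- `End(A)`: the trace is nonempty and its last symbol is in `A`. -/
def EndC {α : Type} (A : Set α) (σ : List α) : Prop :=
  ∃ a ∈ A, σ.getLast? = some a

/-- `AlternatePrecedence(B, A)`: every `A`-position is preceded by a `B`-position
with no `A`-position strictly in between. -/
def AltPrecC {α : Type} (B A : Set α) (σ : List α) : Prop :=
  ∀ i : Fin σ.length, σ.get i ∈ A →
    ∃ j : Fin σ.length, j < i ∧ σ.get j ∈ B ∧
      ∀ k : Fin σ.length, j < k → k < i → σ.get k ∉ A

/-- The Declare constraint that Algorithm 1 generates from place `p`: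
`AlternatePrecedence(•p, p•)` if both `•p` and `p•` are nonempty,
`AtMostOne(p•)` if `•p = ∅`, and `End(•p)` if `p• = ∅`. -/
def PlaceConstraint (N : WorkflowNet P T) (p : P) (σ : List T) : Prop :=
  if preset N p = ∅ then AtMostOneC (postset N p) σ
  else if postset N p = ∅ then EndC (preset N p) σ
  else AltPrecC (preset N p) (postset N p) σ

/-- A model trace of the specification `DS(WN)`: it satisfies the
constraint generated from every place of the net. -/
def ModelTrace (N : WorkflowNet P T) (σ : List T) : Prop :=
  ∀ p : P, PlaceConstraint N p σ

/-- Every transition has at least one input place. -/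
lemma trans_has_input (N : WorkflowNet P T) (t : T) : ∃ p, N.Fpt p t := by
  obtain ⟨h1, _⟩ := N.on_path (Sum.inr t)
  rcases h1.cases_tail with heq | ⟨x, _, e⟩
  · exact absurd heq (by simp)
  · cases x with
    | inl p => exact ⟨p, e⟩
    | inr t' => exact absurd e (by simp [NetEdge])

/-- Once the source place is empty, it stays empty. -/
lemma source_zero_stays (N : WorkflowNet P T) {M M' : P → ℕ} {σ : List T}
    (h : FiresSeq N M σ M') (h0 : M N.source = 0) : M' N.source = 0 := by
  induction h with
  | nil => exact h0
  | cons hf _ ih =>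
    apply ih
    rename_i M M1 _ t _ _
    obtain ⟨_, hupd⟩ := hf
    obtain ⟨h1, _, h3⟩ := hupd N.source
    by_cases hc : N.Fpt N.source t
    · rw [h1 ⟨hc, N.source_pre_empty t⟩, h0]
    · rw [h3 (fun h => hc h.1) (fun h => N.source_pre_empty t h.1), h0]

/-- A reachable marking with a token on the source is the initial marking. -/
lemma reach_source_pos (N : WorkflowNet P T) {M : P → ℕ} (h : Reachable N M)
    (hp : 0 < M N.source) : M = initialMarking N := by
  obtain ⟨σ, hs⟩ := h
  cases hs with
  | nil => rfl
  | cons hf hrest =>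
    exfalso
    rename_i M1 t σ'
    obtain ⟨q, hq⟩ := trans_has_input N t
    have hen := hf.1
    have hq0 : 0 < initialMarking N q := hen q hq
    have hqs : q = N.source := by
      by_contra hne
      simp [initialMarking, hne] at hq0
    subst hqs
    have hM1 : M1 N.source = 0 := by
      obtain ⟨h1, _, _⟩ := hf.2 N.source
      rw [h1 ⟨hq, N.source_pre_empty t⟩]
      simp [initialMarking]
    have := source_zero_stays N hrest hM1
    omega

/-- In a sound workflow net, every transition in `▶•` has `▶` as its unique
input place. -/
theorem source_postset_unique_input {P T : Type} [Finite P] [Finite T]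
    (N : WorkflowNet P T) (hsound : Sound N) :
    ∀ t ∈ postset N N.source, ∀ p : P, N.Fpt p t → p = N.source := by
  intro t ht p hpt
  obtain ⟨M, hM, hen⟩ := hsound.2.2 t
  have hsrc : 0 < M N.source := hen N.source ht
  have hMi : M = initialMarking N := reach_source_pos N hM hsrc
  have hp0 : 0 < M p := hen p hpt
  rw [hMi] at hp0
  by_contra h
  simp [initialMarking, h] at hp0
end

section
/- Let WN = (P, T, F) be a safe and sound workflow net and let σ be a finite trace over T that satisfies the constraint AtMostOne(▶•) and, for every place p ∈ P with both •p and p• nonempty, the constraint AlternatePrecedence(•p, p•). Then σ is a firing sequence of WN: replaying σ from the initial marking M₀, every transition of σ is enabled at the marking reached when it is fired. -/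
open Classical

variable {P T : Type}

/-- Deterministic firing function. -/
noncomputable def fire (N : WorkflowNet P T) (M : P → ℕ) (t : T) : P → ℕ :=
  fun p =>
    if N.Fpt p t ∧ ¬ N.Ftp t p then M p - 1
    else if N.Ftp t p ∧ ¬ N.Fpt p t then M p + 1
    else M p

lemma fires_fire {N : WorkflowNet P T} {M : P → ℕ} {t : T}
    (h : Enables N M t) : Fires N M t (fire N M t) := by
  refine ⟨h, fun p => ⟨fun ha => ?_, fun hb => ?_, fun ha hb => ?_⟩⟩
  · simp only [fire, if_pos ha]
  · have ha : ¬ (N.Fpt p t ∧ ¬ N.Ftp t p) := fun hc => hb.2 hc.1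
    simp only [fire, if_neg ha, if_pos hb]
  · simp only [fire, if_neg ha, if_neg hb]

lemma fires_eq {N : WorkflowNet P T} {M M' : P → ℕ} {t : T}
    (h : Fires N M t M') : M' = fire N M t := by
  funext p
  obtain ⟨ha, hb, hc⟩ := h.2 p
  by_cases a : N.Fpt p t ∧ ¬ N.Ftp t p
  · rw [ha a]; simp only [fire, if_pos a]
  · by_cases b : N.Ftp t p ∧ ¬ N.Fpt p t
    · rw [hb b]; simp only [fire, if_neg a, if_pos b]
    · rw [hc a b]; simp only [fire, if_neg a, if_neg b]

/-- Replay a list of transitions. -/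
noncomputable def fireSeq (N : WorkflowNet P T) (M : P → ℕ) (l : List T) : P → ℕ :=
  l.foldl (fire N) M

@[simp] lemma fireSeq_nil (N : WorkflowNet P T) (M : P → ℕ) : fireSeq N M [] = M := rfl

lemma fireSeq_cons (N : WorkflowNet P T) (M : P → ℕ) (t : T) (l : List T) :
    fireSeq N M (t :: l) = fireSeq N (fire N M t) l := rfl

lemma fireSeq_append (N : WorkflowNet P T) (M : P → ℕ) (l l' : List T) :
    fireSeq N M (l ++ l') = fireSeq N (fireSeq N M l) l' := by
  simp [fireSeq, List.foldl_append]

/-- If no transition of `l` consumes from `p`, replaying `l` cannot decrease `p`. -/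
lemma fireSeq_mono {N : WorkflowNet P T} {p : P} :
    ∀ (l : List T) (M : P → ℕ), (∀ t ∈ l, ¬ N.Fpt p t) →
      M p ≤ fireSeq N M l p
  | [], _, _ => le_refl _
  | t :: l, M, h => by
      have h1 : ¬ N.Fpt p t := h t List.mem_cons_self
      have hstep : M p ≤ fire N M t p := by
        simp only [fire, if_neg (fun hc : N.Fpt p t ∧ ¬ N.Ftp t p => h1 hc.1)]
        split <;> omega
      exact le_trans hstep
        (fireSeq_mono l (fire N M t) (fun s hs => h s (List.mem_cons_of_mem _ hs)))

lemma enables_within {N : WorkflowNet P T} {M M'' : P → ℕ} {l : List T}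
    (h : FiresSeq N M l M'') :
    ∀ i (hi : i < l.length), Enables N (fireSeq N M (l.take i)) (l.get ⟨i, hi⟩) := by
  induction h with
  | nil M => intro i hi; simp at hi
  | @cons M M' M'' t σ hF hS ih =>
    intro i hi
    cases i with
    | zero => simpa using hF.1
    | succ i =>
      have he : fire N M t = M' := (fires_eq hF).symm
      have hi' : i < σ.length := by simpa using hi
      simpa [List.take_succ_cons, fireSeq_cons, he] using ih i hi'

lemma firesSeq_concat {N : WorkflowNet P T} {M M' M'' : P → ℕ} {l : List T} {t : T}
    (h : FiresSeq N M l M') (h2 : Fires N M' t M'') : FiresSeq N M (l ++ [t]) M'' := by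
  induction h with
  | nil M => exact .cons h2 (.nil _)
  | cons hF _ ih => exact .cons hF (ih h2)

/-- In a safe and sound workflow net, every finite trace satisfying
`AtMostOne(▶•)` and, for every place `p` with both `•p` and `p•` nonempty,
`AlternatePrecedence(•p, p•)`, is a firing sequence of the net: replaying it
from the initial marking, every transition is enabled when it is fired. -/
theorem constrained_trace_is_firingSequence {P T : Type} [Finite P] [Finite T]
    (N : WorkflowNet P T) (hsafe : Safe N) (hsound : Sound N)
    (σ : List T)
    (h1 : AtMostOneC (postset N N.source) σ)
    (h2 : ∀ p : P, preset N p ≠ ∅ → postset N p ≠ ∅ →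
      AltPrecC (preset N p) (postset N p) σ) :
    FiringSequence N σ := by
  classical
  suffices h : ∀ n, n ≤ σ.length →
      FiresSeq N (initialMarking N) (σ.take n) (fireSeq N (initialMarking N) (σ.take n)) by
    have hfin := h σ.length le_rfl
    rw [List.take_length] at hfin
    exact ⟨_, hfin⟩
  intro n
  induction n with
  | zero => intro _; simpa using FiresSeq.nil (initialMarking N)
  | succ n ih =>
    intro hn
    have hn' : n < σ.length := hn
    have hseq := ih (le_of_lt hn')
    set tn := σ.get ⟨n, hn'⟩ with htn
    have hen : Enables N (fireSeq N (initialMarking N) (σ.take n)) tn := by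
      intro p hp
      by_cases hpre : preset N p = ∅
      · -- p is the source place
        have hps : p = N.source := by
          refine N.source_unique p (fun t ht => ?_)
          have : t ∈ preset N p := ht
          rw [hpre] at this
          exact this
        subst hps
        have hnone : ∀ t ∈ σ.take n, ¬ N.Fpt N.source t := by
          intro t ht hFpt
          obtain ⟨m, hm, hmt⟩ := List.mem_iff_getElem.mp ht
          have hmn : m < n := lt_of_lt_of_le hm (by simp [List.length_take])
          have hmσ : m < σ.length := lt_trans hmn hn'
          have hget : σ.get ⟨m, hmσ⟩ = t := by
            rw [← hmt]; simp [List.getElem_take]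
          have hmem : σ.get ⟨m, hmσ⟩ ∈ postset N N.source := by rw [hget]; exact hFpt
          have hmem' : σ.get ⟨n, hn'⟩ ∈ postset N N.source := hp
          have := h1 ⟨m, hmσ⟩ ⟨n, hn'⟩ hmem hmem'
          have : m = n := by simpa [Fin.ext_iff] using this
          omega
        have hmono := fireSeq_mono (σ.take n) (initialMarking N) hnone
        have : initialMarking N N.source = 1 := by simp [initialMarking]
        omega
      · -- internal place: use alternate precedence
        have hpost : postset N p ≠ ∅ := by
          intro h
          have : tn ∈ postset N p := hp
          rw [h] at this
          exact this
        obtain ⟨j, hji, hjB, hbet⟩ := h2 p hpre hpost (⟨n, hn'⟩ : Fin σ.length) hp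
        have hjn : (j : ℕ) < n := hji
        -- the marking after j+1 steps has a token in p
        have hjlen : (j : ℕ) < (σ.take n).length := by simp [List.length_take]; omega
        have hEj : Enables N (fireSeq N (initialMarking N) ((σ.take n).take j))
            ((σ.take n).get ⟨j, hjlen⟩) := enables_within hseq (j : ℕ) hjlen
        have htt : (σ.take n).take (j : ℕ) = σ.take (j : ℕ) := by
          rw [List.take_take]; congr 1; omega
        have hgj : (σ.take n).get ⟨j, hjlen⟩ = σ.get j := by
          simp [List.getElem_take]
        rw [htt, hgj] at hEj
        set Mj := fireSeq N (initialMarking N) (σ.take (j : ℕ)) with hMj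
        have hstep : σ.take ((j : ℕ) + 1) = σ.take (j : ℕ) ++ [σ.get j] := by
          rw [List.take_succ]
          congr 1
          simp [List.getElem?_eq_getElem j.isLt]
        have hMj1 : fireSeq N (initialMarking N) (σ.take ((j : ℕ) + 1)) =
            fire N Mj (σ.get j) := by
          rw [hstep, fireSeq_append]; rfl
        have hposj1 : 0 < fireSeq N (initialMarking N) (σ.take ((j : ℕ) + 1)) p := by
          rw [hMj1]
          have hFtp : N.Ftp (σ.get j) p := hjB
          by_cases hF : N.Fpt p (σ.get j)
          · have : fire N Mj (σ.get j) p = Mj p := by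
              simp only [fire, if_neg (fun hc : N.Fpt p (σ.get j) ∧ ¬ N.Ftp (σ.get j) p => hc.2 hFtp),
                if_neg (fun hc : N.Ftp (σ.get j) p ∧ ¬ N.Fpt p (σ.get j) => hc.2 hF)]
            rw [this]
            exact hEj p hF
          · have : fire N Mj (σ.get j) p = Mj p + 1 := by
              simp only [fire]
              rw [if_neg (fun hc : N.Fpt p (σ.get j) ∧ ¬ N.Ftp (σ.get j) p => hF hc.1),
                if_pos (show N.Ftp (σ.get j) p ∧ ¬ N.Fpt p (σ.get j) from ⟨hFtp, hF⟩)]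
            omega
        -- from step j+1 to n, no transition consumes from p
        have hsplit : σ.take n = σ.take ((j : ℕ) + 1) ++ (σ.take n).drop ((j : ℕ) + 1) := by
          conv_lhs => rw [← List.take_append_drop ((j : ℕ) + 1) (σ.take n)]
          congr 1
          rw [List.take_take]
          congr 1
          omega
        have hnone : ∀ t ∈ (σ.take n).drop ((j : ℕ) + 1), ¬ N.Fpt p t := by
          intro t ht hFpt
          obtain ⟨m, hm, hmt⟩ := List.mem_iff_getElem.mp ht
          have hmlen : (j : ℕ) + 1 + m < (σ.take n).length := by
            rw [List.length_drop] at hm; omega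
          have hkn : (j : ℕ) + 1 + m < n := by
            simp [List.length_take] at hmlen; omega
          have hkσ : (j : ℕ) + 1 + m < σ.length := lt_trans hkn hn'
          have hval : t = σ.get ⟨(j : ℕ) + 1 + m, hkσ⟩ := by
            rw [← hmt, List.getElem_drop]
            simp [List.getElem_take]
          have hcontra := hbet ⟨(j : ℕ) + 1 + m, hkσ⟩ (by simp [Fin.lt_def]; omega)
            (by simp [Fin.lt_def]; omega)
          exact hcontra (hval ▸ hFpt)
        have hmono := fireSeq_mono ((σ.take n).drop ((j : ℕ) + 1))
          (fireSeq N (initialMarking N) (σ.take ((j : ℕ) + 1))) hnone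
        rw [← fireSeq_append, ← hsplit] at hmono
        omega
    have hfire := fires_fire hen
    have hconc := firesSeq_concat hseq hfire
    have htake : σ.take (n + 1) = σ.take n ++ [tn] := by
      rw [List.take_succ]
      congr 1
      simp [List.getElem?_eq_getElem hn', htn]
    rw [htake, fireSeq_append]
    exact hconc
end
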